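/- arXiv:2404.19058 — 2 statements merged into one kernel-verified Lean document; each statement's English description precedes it below -/
import Mathlib

section
/- Let $G$ be a group and let $\{A_1,\dots,A_p\}$ and $\{B_1,\dots,B_q\}$ be two malnormal collections of subgroups of $G$. Then the collection of all nontrivial subgroups of the form $A_k \cap w B_s w^{-1}$ (for $w \in G$, $1 \le k \le p$, $1 \le s \le q$), taken up to conjugacy, is again malnormal: if $x (A_k \cap w B_s w^{-1}) x^{-1} \cap (A_{k'} \cap w' B_{s'} (w')^{-1}) \neq \{1\}$ then $k = k'$, $s = s'$, $x A_k x^{-1} = A_{k'}$, $x w B_s w^{-1} x^{-1} = w' B_{s'} (w')^{-1}$, and in particular $x \in A_{k}\,$ whenever $k=k'$ and $x A_k x^{-1} \cap A_{k'} \neq \{1\}$. -/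
/-- The conjugate `g H g⁻¹` of a subgroup. -/
def conjSub {G : Type*} [Group G] (g : G) (H : Subgroup G) : Subgroup G :=
  Subgroup.map (MulAut.conj g).toMonoidHom H

lemma mem_conjSub {G : Type*} [Group G] {g y : G} {H : Subgroup G} :
    y ∈ conjSub g H ↔ g⁻¹ * y * g ∈ H := by
  constructor
  · rintro ⟨h, hh, rfl⟩
    simpa [MulAut.conj, mul_assoc] using hh
  · intro h
    exact ⟨g⁻¹ * y * g, h, by simp [MulAut.conj, mul_assoc]⟩

lemma conjSub_mul {G : Type*} [Group G] (a b : G) (H : Subgroup G) :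
    conjSub (a * b) H = conjSub a (conjSub b H) := by
  ext y; simp only [mem_conjSub, mul_inv_rev, mul_assoc]

lemma conjSub_inf {G : Type*} [Group G] (g : G) (H K : Subgroup G) :
    conjSub g (H ⊓ K) = conjSub g H ⊓ conjSub g K := by
  ext y; simp [mem_conjSub]

lemma conjSub_eq_bot {G : Type*} [Group G] {g : G} {H : Subgroup G} :
    conjSub g H = ⊥ ↔ H = ⊥ := by
  simp only [Subgroup.eq_bot_iff_forall]
  constructor
  · intro h y hy
    have := h (g * y * g⁻¹) (mem_conjSub.2 (by simpa [mul_assoc] using hy))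
    calc y = g⁻¹ * (g * y * g⁻¹) * g := by group
      _ = 1 := by rw [this]; group
  · intro h y hy
    have := h _ (mem_conjSub.1 hy)
    calc y = g * (g⁻¹ * y * g) * g⁻¹ := by group
      _ = 1 := by rw [this]; group

lemma conjSub_inv_conjSub {G : Type*} [Group G] (g : G) (H : Subgroup G) :
    conjSub g⁻¹ (conjSub g H) = H := by
  rw [← conjSub_mul]; ext y; simp [mem_conjSub]

lemma conjSub_self {G : Type*} [Group G] {g : G} {H : Subgroup G} (hg : g ∈ H) :
    conjSub g H = H := by
  ext y
  rw [mem_conjSub]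
  exact ⟨fun h => by simpa [mul_assoc] using H.mul_mem (H.mul_mem hg h) (H.inv_mem hg),
    fun h => H.mul_mem (H.mul_mem (H.inv_mem hg) h) hg⟩

lemma conjSub_mono {G : Type*} [Group G] (g : G) {H K : Subgroup G} (h : H ≤ K) :
    conjSub g H ≤ conjSub g K := fun y hy => mem_conjSub.2 (h (mem_conjSub.1 hy))

/-- A finite collection of subgroups is malnormal if whenever a conjugate of one member meets
another member nontrivially, the indices agree and the conjugator lies in that member. -/
def MalnormalCollection {G : Type*} [Group G] {ι : Type*} (A : ι → Subgroup G) : Prop :=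
  ∀ (i j : ι) (x : G), conjSub x (A i) ⊓ A j ≠ ⊥ → i = j ∧ x ∈ A i

/-- The meet of two malnormal collections of subgroups is again malnormal. -/
theorem stmt_5 {G : Type*} [Group G] {p q : ℕ}
    (A : Fin p → Subgroup G) (B : Fin q → Subgroup G)
    (hA : MalnormalCollection A) (hB : MalnormalCollection B)
    (k k' : Fin p) (s s' : Fin q) (w w' x : G)
    (hne : A k ⊓ conjSub w (B s) ≠ ⊥)
    (hne' : A k' ⊓ conjSub w' (B s') ≠ ⊥)
    (hmeet : conjSub x (A k ⊓ conjSub w (B s)) ⊓ (A k' ⊓ conjSub w' (B s')) ≠ ⊥) :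
    k = k' ∧ s = s' ∧ conjSub x (A k) = A k' ∧
      conjSub x (conjSub w (B s)) = conjSub w' (B s') ∧
      (k = k' → conjSub x (A k) ⊓ A k' ≠ ⊥ → x ∈ A k) := by
  have hle1 : conjSub x (A k ⊓ conjSub w (B s)) ⊓ (A k' ⊓ conjSub w' (B s'))
      ≤ conjSub x (A k) ⊓ A k' :=
    inf_le_inf (conjSub_mono x inf_le_left) inf_le_left
  have hle2 : conjSub x (A k ⊓ conjSub w (B s)) ⊓ (A k' ⊓ conjSub w' (B s'))
      ≤ conjSub x (conjSub w (B s)) ⊓ conjSub w' (B s') :=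
    inf_le_inf (conjSub_mono x inf_le_right) inf_le_right
  have h1 : conjSub x (A k) ⊓ A k' ≠ ⊥ := fun h => hmeet (le_bot_iff.1 (h ▸ hle1))
  have h2 : conjSub x (conjSub w (B s)) ⊓ conjSub w' (B s') ≠ ⊥ :=
    fun h => hmeet (le_bot_iff.1 (h ▸ hle2))
  obtain ⟨hkk, hxA⟩ := hA k k' x h1
  -- now conjugate the B-side by w'⁻¹
  have h2' : conjSub (w'⁻¹ * (x * w)) (B s) ⊓ B s' ≠ ⊥ := by
    intro h
    apply h2
    have : conjSub w' (conjSub (w'⁻¹ * (x * w)) (B s) ⊓ B s') = ⊥ := by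
      rw [h]; exact conjSub_eq_bot.2 rfl
    rw [conjSub_inf, ← conjSub_mul, ← mul_assoc, mul_inv_cancel, one_mul,
      conjSub_mul] at this
    exact this
  obtain ⟨hss, hwB⟩ := hB s s' (w'⁻¹ * (x * w)) h2'
  refine ⟨hkk, hss, ?_, ?_, fun _ h => (hA k k' x h).2⟩
  · rw [← hkk, conjSub_self hxA]
  · rw [← conjSub_mul, ← hss]
    have : conjSub w' (conjSub (w'⁻¹ * (x * w)) (B s)) = conjSub w' (B s) := by
      rw [conjSub_self hwB]
    rwa [← conjSub_mul, ← mul_assoc, mul_inv_cancel, one_mul] at this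
end

section
/- Let $F_4$ be the free group on $a,b,c,d$ and let $\theta \in \mathrm{Aut}(F_4)$ be defined by $\theta(a) = bd$, $\theta(b) = b$, $\theta(c) = c$, $\theta(d) = b^{-1}ac$. Let $\iota_b \in \mathrm{Aut}(F_4)$ be conjugation by $b$. Then $\theta$ and $\iota_b$ commute, both have infinite order, and the subgroup $\langle \theta, \iota_b \rangle \leq \mathrm{Aut}(F_4)$ is isomorphic to $\mathbb{Z} \times \mathbb{Z}$. -/
lemma aux_fix_nat {G : Type*} [Group G] (θ : MulAut G) (x : G) (h : θ x = x) :
    ∀ m : ℕ, (θ ^ m) x = x := by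
  intro m
  induction m with
  | zero => simp
  | succ k ih => rw [pow_succ', MulAut.mul_apply, ih, h]

lemma aux_fix {G : Type*} [Group G] (θ : MulAut G) (x : G) (h : θ x = x) :
    ∀ m : ℤ, (θ ^ m) x = x := by
  intro m
  rcases m with m | m
  · simpa using aux_fix_nat θ x h m
  · rw [zpow_negSucc, MulAut.inv_def, MulEquiv.symm_apply_eq]
    exact (aux_fix_nat θ x h (m + 1)).symm

lemma aux_bc (n : ℤ)
    (h : (FreeGroup.of 1 : FreeGroup (Fin 4)) ^ n * FreeGroup.of 2
        = FreeGroup.of 2 * FreeGroup.of 1 ^ n) : n = 0 := by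
  classical
  set ρ : FreeGroup (Fin 4) →* Matrix.SpecialLinearGroup (Fin 2) ℤ :=
    FreeGroup.lift (fun i : Fin 4 =>
      if i = 1 then ModularGroup.T else if i = 2 then ModularGroup.S else 1) with hρ
  have h2 := congrArg ρ h
  rw [map_mul, map_mul, map_zpow] at h2
  rw [hρ] at h2
  simp only [FreeGroup.lift_apply_of] at h2
  norm_num [Fin.ext_iff] at h2
  have h3 := congrArg (fun A : Matrix.SpecialLinearGroup (Fin 2) ℤ => (A : Matrix (Fin 2) (Fin 2) ℤ) 0 0) h2
  simp only [Matrix.SpecialLinearGroup.coe_mul, ModularGroup.coe_T_zpow, ModularGroup.coe_S,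
    Matrix.mul_apply, Fin.sum_univ_two] at h3
  norm_num [Matrix.cons_val_zero, Matrix.cons_val_one] at h3
  exact h3

/-- c-exponent homomorphism -/
noncomputable def aux_phi : FreeGroup (Fin 4) →* Multiplicative ℤ :=
  FreeGroup.lift (fun i : Fin 4 => if i = 2 then Multiplicative.ofAdd (1 : ℤ) else 1)

lemma aux_phi_c : aux_phi (FreeGroup.of 2) = Multiplicative.ofAdd (1 : ℤ) := by
  rw [aux_phi, FreeGroup.lift_apply_of, if_pos rfl]

lemma aux_phi_a : aux_phi (FreeGroup.of 0) = 1 := by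
  rw [aux_phi, FreeGroup.lift_apply_of, if_neg (by decide)]


set_option maxHeartbeats 1000000 in
/-- In `Aut(F₄)`, the automorphism `θ : a ↦ bd, b ↦ b, c ↦ c, d ↦ b⁻¹ac` commutes with
conjugation by `b`, both have infinite order, and together they generate a subgroup
isomorphic to `ℤ × ℤ`. -/
theorem stmt_10 :
    let a : FreeGroup (Fin 4) := FreeGroup.of 0
    let b : FreeGroup (Fin 4) := FreeGroup.of 1
    let c : FreeGroup (Fin 4) := FreeGroup.of 2
    let d : FreeGroup (Fin 4) := FreeGroup.of 3
    ∀ θ : MulAut (FreeGroup (Fin 4)),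
      θ a = b * d → θ b = b → θ c = c → θ d = b⁻¹ * a * c →
      Commute θ (MulAut.conj b) ∧ ¬ IsOfFinOrder θ ∧ ¬ IsOfFinOrder (MulAut.conj b) ∧
        Nonempty ((Subgroup.closure {θ, MulAut.conj b} : Subgroup (MulAut (FreeGroup (Fin 4))))
          ≃* Multiplicative (ℤ × ℤ)) := by
  intro a b c d θ ha hb hc hd
  set ι : MulAut (FreeGroup (Fin 4)) := MulAut.conj b with hι
  -- Commutation
  have hcomm : Commute θ ι := by
    show θ * ι = ι * θ
    apply MulEquiv.ext
    intro x
    simp only [MulAut.mul_apply, hι, MulAut.conj_apply, map_mul, map_inv, hb]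
  -- θ² a = a * c
  have hθ2a : (θ ^ 2) a = a * c := by
    rw [pow_two, MulAut.mul_apply, ha, map_mul, hb, hd]
    group
  -- θ^(2k) a = a * c^k
  have h2k : ∀ k : ℕ, (θ ^ (2 * k)) a = a * c ^ k := by
    intro k
    induction k with
    | zero => simp
    | succ k ih =>
      have : 2 * (k + 1) = 2 * k + 2 := by ring
      rw [this, pow_add, MulAut.mul_apply, hθ2a, map_mul,
        aux_fix_nat θ c hc (2 * k), ih, pow_succ, mul_assoc]
  -- infinite order of θ
  have hθinf : ¬ IsOfFinOrder θ := by
    rw [isOfFinOrder_iff_pow_eq_one]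
    rintro ⟨n, hn, hpow⟩
    have h1 : (θ ^ (2 * n)) a = a := by
      rw [two_mul, pow_add, hpow, one_mul, MulAut.one_apply]
    rw [h2k n] at h1
    have h2 := congrArg aux_phi h1
    rw [map_mul, map_pow] at h2
    have hca : aux_phi c = Multiplicative.ofAdd (1 : ℤ) := aux_phi_c
    have haa : aux_phi a = 1 := aux_phi_a
    rw [hca, haa, one_mul] at h2
    have : (n : ℤ) = 0 := by
      have := congrArg Multiplicative.toAdd h2
      simpa using this
    omega
  -- b^n commutes with c implies n = 0, nat version already from aux_bc
  -- infinite order of ι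
  have hιinf : ¬ IsOfFinOrder ι := by
    rw [isOfFinOrder_iff_pow_eq_one]
    rintro ⟨n, hn, hpow⟩
    have h1 : ι ^ n = MulAut.conj (b ^ n) := (map_pow (MulAut.conj) b n).symm
    have h2 : MulAut.conj (b ^ n) c = c := by rw [← h1, hpow, MulAut.one_apply]
    rw [MulAut.conj_apply, mul_inv_eq_iff_eq_mul] at h2
    have := aux_bc (n : ℤ) (by rw [zpow_natCast]; exact h2)
    omega
  refine ⟨hcomm, hθinf, hιinf, ?_⟩
  -- the homomorphism from ℤ × ℤ
  have hzz : ∀ (m n : ℤ), Commute (θ ^ m) (ι ^ n) := fun m n => hcomm.zpow_zpow m n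
  set f : Multiplicative (ℤ × ℤ) →* MulAut (FreeGroup (Fin 4)) :=
    { toFun := fun p => θ ^ (Multiplicative.toAdd p).1 * ι ^ (Multiplicative.toAdd p).2,
      map_one' := by simp,
      map_mul' := by
        intro p q
        simp only [toAdd_mul, Prod.fst_add, Prod.snd_add, zpow_add]
        exact (hzz _ _).mul_mul_mul_comm _ _ } with hf
  have hf_apply : ∀ m n : ℤ, f (Multiplicative.ofAdd (m, n)) = θ ^ m * ι ^ n := fun m n => rfl
  -- injectivity
  have hinj : Function.Injective f := by
    rw [injective_iff_map_eq_one]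
    intro p hp
    set m := (Multiplicative.toAdd p).1 with hm
    set n := (Multiplicative.toAdd p).2 with hn
    have hp' : θ ^ m * ι ^ n = 1 := hp
    -- apply at c
    have h1 : (θ ^ m) ((ι ^ n) c) = c := by
      rw [← MulAut.mul_apply, hp', MulAut.one_apply]
    have h2 : (ι ^ n) c = b ^ n * c * (b ^ n)⁻¹ := by
      rw [hι, ← map_zpow (MulAut.conj) b n, MulAut.conj_apply]
    rw [h2, map_mul, map_mul, map_inv, map_zpow, aux_fix θ b hb m,
      aux_fix θ c hc m] at h1
    rw [mul_inv_eq_iff_eq_mul] at h1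
    have hn0 : n = 0 := aux_bc n h1
    have hm0 : m = 0 := by
      by_contra hm0
      apply hθinf
      rw [isOfFinOrder_iff_pow_eq_one]
      refine ⟨m.natAbs, Int.natAbs_pos.mpr hm0, ?_⟩
      have hθm : θ ^ m = 1 := by
        rw [hn0, zpow_zero, mul_one] at hp'
        exact hp'
      rcases Int.natAbs_eq m with he | he
      · rw [← zpow_natCast, ← he, hθm]
      · have : θ ^ (m.natAbs : ℤ) = (θ ^ m)⁻¹ := by
          rw [he]; rw [zpow_neg]; simp
        rw [← zpow_natCast, this, hθm, inv_one]
    have : Multiplicative.toAdd p = 0 := Prod.ext (by simpa using hm0.symm ▸ rfl) (by simp [← hn, hn0])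
    simpa using congrArg Multiplicative.ofAdd this
  -- range = closure
  have hrange : f.range = Subgroup.closure {θ, ι} := by
    apply le_antisymm
    · rintro x ⟨p, rfl⟩
      have hfp : f p = θ ^ (Multiplicative.toAdd p).1 * ι ^ (Multiplicative.toAdd p).2 := rfl
      rw [hfp]
      have h1 : θ ∈ Subgroup.closure {θ, ι} := Subgroup.subset_closure (by simp)
      have h2 : ι ∈ Subgroup.closure {θ, ι} := Subgroup.subset_closure (by simp)
      exact mul_mem (zpow_mem h1 _) (zpow_mem h2 _)
    · rw [Subgroup.closure_le]
      rintro x (rfl | rfl)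
      · exact ⟨Multiplicative.ofAdd (1, 0), by rw [hf_apply]; simp⟩
      · exact ⟨Multiplicative.ofAdd (0, 1), by rw [hf_apply]; simp⟩
  exact ⟨((MonoidHom.ofInjective hinj).trans (MulEquiv.subgroupCongr hrange)).symm⟩
end
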